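/- Let s ≥ 0 and let b_s^1 be the space of sequences α = (α_k)_{k≥1} with ‖α‖ := ∑_{k=1}^∞ k^s|α_k| < ∞. Then the best n-term approximation error in ℓ₂ satisfies σ_n(α) := (∑_{k=n+1}^∞ (α*_k)²)^{1/2} ≤ (s+1)/√(2s+1) · n^{-s-1/2} · ‖α‖ for every n ≥ 1, where α* is the non-increasing rearrangement of (|α_k|). -/

import Mathlib

lemma aux_bern {p a b : ℝ} (hp : 1 ≤ p) (ha : 0 ≤ a) (hab : a ≤ b) :
    b ^ p - a ^ p ≤ p * b ^ (p - 1) * (b - a) := by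
  rcases eq_or_lt_of_le (ha.trans hab) with hb | hb
  · have hb0 : b = 0 := hb.symm
    have ha0 : a = 0 := le_antisymm (hab.trans_eq hb0) ha
    simp [ha0, hb0]
  · have key := one_add_mul_self_le_rpow_one_add (s := a / b - 1)
      (by have := div_nonneg ha hb.le; linarith) hp
    have h1 : (1 : ℝ) + (a / b - 1) = a / b := by ring
    rw [h1, Real.div_rpow ha hb.le] at key
    have hbp : (0 : ℝ) < b ^ p := Real.rpow_pos_of_pos hb p
    have hb1 : b ^ (p - 1) * b = b ^ p := by
      have h := Real.rpow_add hb (p - 1) 1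
      rw [Real.rpow_one] at h
      rw [← h]; ring_nf
    have h2 : (1 + p * (a / b - 1)) * b ^ p ≤ a ^ p / b ^ p * b ^ p :=
      mul_le_mul_of_nonneg_right key hbp.le
    rw [div_mul_cancel₀ _ hbp.ne'] at h2
    have h4 : a / b * b ^ p = a * b ^ (p - 1) := by
      rw [← hb1]; field_simp
    have h5 : b ^ p + p * (a * b ^ (p - 1)) - p * b ^ p ≤ a ^ p := by
      have e : (1 + p * (a / b - 1)) * b ^ p
          = b ^ p + p * (a / b * b ^ p) - p * b ^ p := by ring
      rw [e, h4] at h2; linarith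
    have h6 : p * b ^ (p - 1) * (b - a) = p * b ^ p - p * (a * b ^ (p - 1)) := by
      rw [← hb1]; ring
    rw [h6]; linarith

lemma aux_tail {q a : ℝ} (hq : 1 ≤ q) (ha : 0 < a) :
    q * (a + 1) ^ (-(q + 1)) ≤ a ^ (-q) - (a + 1) ^ (-q) := by
  have ha1 : (0:ℝ) < a + 1 := by linarith
  have key := one_add_mul_self_le_rpow_one_add (s := 1 / a)
    (by nlinarith [one_div_pos.mpr ha]) hq
  have h1 : (1 : ℝ) + 1 / a = (a + 1) / a := by field_simp
  rw [h1, Real.div_rpow ha1.le ha.le] at key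
  have hX : (0:ℝ) < a ^ q := Real.rpow_pos_of_pos ha q
  have hY : (0:ℝ) < (a + 1) ^ q := Real.rpow_pos_of_pos ha1 q
  have hZ : (a + 1) ^ (q + 1) = (a + 1) ^ q * (a + 1) := by
    rw [Real.rpow_add ha1, Real.rpow_one]
  rw [Real.rpow_neg ha.le, Real.rpow_neg ha1.le, Real.rpow_neg ha1.le, hZ, mul_inv]
  have key2 : q * a ^ q ≤ a * ((a+1)^q - a^q) := by
    have h := (le_div_iff₀ hX).mp key
    have ha' : a ≠ 0 := ha.ne'
    have e : (1 + q * (1 / a)) * a ^ q = a ^ q + q * (a ^ q / a) := by ring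
    rw [e] at h
    have e2 : a * (a ^ q / a) = a ^ q := by field_simp
    nlinarith [h]
  rw [← sub_nonneg]
  have expr : (a ^ q)⁻¹ - ((a+1) ^ q)⁻¹ - q * (((a+1) ^ q)⁻¹ * (a+1)⁻¹)
      = ((a+1) * ((a+1)^q - a^q) - q * a^q) / (a^q * (a+1)^q * (a+1)) := by
    field_simp
  rw [expr]
  apply div_nonneg _ (by positivity)
  nlinarith [key2, hX, hY]

lemma aux_card_sum (g : ℕ → ℝ) (hg : Monotone g) :
    ∀ (k : ℕ) (T : Finset ℕ), T.card = k →
      ∑ i ∈ Finset.range k, g i ≤ ∑ i ∈ T, g i := by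
  intro k
  induction k with
  | zero => intro T hT
            rw [Finset.card_eq_zero.mp hT]; simp
  | succ k ih =>
    intro T hT
    have hne : T.Nonempty := Finset.card_pos.mp (by omega)
    set M := T.max' hne with hMdef
    have hM : M ∈ T := T.max'_mem hne
    have hcard : (T.erase M).card = k := by
      rw [Finset.card_erase_of_mem hM, hT]
      omega
    have hkM : k ≤ M := by
      by_contra h
      push_neg at h
      have hsub : T ⊆ Finset.range (M + 1) := fun x hx =>
        Finset.mem_range.mpr (Nat.lt_succ_of_le (T.le_max' x hx))
      have := Finset.card_le_card hsub
      rw [hT, Finset.card_range] at this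
      omega
    calc ∑ i ∈ Finset.range (k + 1), g i
        = ∑ i ∈ Finset.range k, g i + g k := Finset.sum_range_succ g k
      _ ≤ ∑ i ∈ T.erase M, g i + g M := add_le_add (ih _ hcard) (hg hkM)
      _ = ∑ i ∈ T, g i := Finset.sum_erase_add T g hM


/-- Sequences `(α_k)_{k ≥ 1}` are modelled as `α : ℕ → ℝ`, with `α j` standing
for `α_{j+1}`.  The best `n`-term approximation error in `ℓ₂` is the `ℓ₂`-norm
of the tail of the non-increasing rearrangement `αstar`. -/
theorem stmt_14 (s : ℝ) (hs : 0 ≤ s) (α αstar : ℕ → ℝ)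
    (hsum : Summable (fun j : ℕ => ((j+1 : ℕ) : ℝ)^s * |α j|))
    (σ : Equiv.Perm ℕ) (hrearr : ∀ j, αstar j = |α (σ j)|) (hanti : Antitone αstar)
    (n : ℕ) (hn : 1 ≤ n) :
    Real.sqrt (∑' j : ℕ, (αstar (n + j))^2) ≤
      (s+1) / Real.sqrt (2*s+1) * (n : ℝ) ^ (-(s+1/2)) *
        ∑' j : ℕ, ((j+1 : ℕ) : ℝ)^s * |α j| := by
  set A : ℝ := ∑' j : ℕ, ((j+1 : ℕ) : ℝ)^s * |α j| with hAdef
  have hA0 : 0 ≤ A := tsum_nonneg (fun j => by positivity)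
  have hstar0 : ∀ j, 0 ≤ αstar j := fun j => (hrearr j) ▸ abs_nonneg _
  set g : ℕ → ℝ := fun i => ((i : ℝ) + 1) ^ s with hgdef
  have hgmono : Monotone g := by
    intro i i' h
    apply Real.rpow_le_rpow (by positivity) _ hs
    have hcast : (i:ℝ) ≤ i' := Nat.cast_le.mpr h
    linarith
  have hgeq : ∀ i : ℕ, ((i + 1 : ℕ) : ℝ) ^ s = g i := by
    intro i; simp [hgdef]
  -- the sum of g over range k bounds k^(s+1)/(s+1)
  have hpow_sum : ∀ k : ℕ, (k : ℝ) ^ (s+1) ≤ (s+1) * ∑ j ∈ Finset.range k, g j := by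
    intro k
    induction k with
    | zero => simp [Real.zero_rpow (by positivity : s + 1 ≠ 0)]
    | succ k ih =>
      have hb := aux_bern (p := s+1) (a := (k:ℝ)) (b := (k:ℝ)+1)
        (by linarith) (Nat.cast_nonneg k) (by linarith)
      rw [Finset.sum_range_succ, mul_add]
      have e1 : ((k:ℝ) + 1) ^ (s + 1 - 1) = g k := by
        norm_num [hgdef]
      have e2 : ((k + 1 : ℕ) : ℝ) = (k : ℝ) + 1 := by push_cast; ring
      rw [e2]
      rw [e1] at hb
      nlinarith [hb, ih]
  -- pointwise bound on αstar
  have hpoint : ∀ m : ℕ, ((m : ℝ) + 1) ^ (s+1) * αstar m ≤ (s+1) * A := by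
    intro m
    set T : Finset ℕ := (Finset.range (m+1)).image σ with hTdef
    have hTcard : T.card = m + 1 := by
      rw [hTdef, Finset.card_image_of_injective _ σ.injective, Finset.card_range]
    have hub : ∑ j ∈ Finset.range (m+1), g (σ j) * αstar j ≤ A := by
      have h := sum_le_hasSum T (fun i _ => by positivity) hsum.hasSum
      rw [hTdef, Finset.sum_image (fun x _ y _ h => σ.injective h)] at h
      refine le_trans (le_of_eq (Finset.sum_congr rfl fun j _ => ?_)) h
      rw [hrearr j, hgeq]
    have hmid : ∑ j ∈ Finset.range (m+1), g j * αstar m ≤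
        ∑ j ∈ Finset.range (m+1), g (σ j) * αstar j := by
      have step1 : ∑ j ∈ Finset.range (m+1), g j * αstar m ≤
          ∑ j ∈ Finset.range (m+1), g (σ j) * αstar m := by
        rw [← Finset.sum_mul, ← Finset.sum_mul]
        apply mul_le_mul_of_nonneg_right _ (hstar0 m)
        have := aux_card_sum g hgmono (m+1) T hTcard
        rw [hTdef, Finset.sum_image (fun x _ y _ h => σ.injective h)] at this
        exact this
      have step2 : ∑ j ∈ Finset.range (m+1), g (σ j) * αstar m ≤
          ∑ j ∈ Finset.range (m+1), g (σ j) * αstar j := by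
        apply Finset.sum_le_sum
        intro j hj
        have hjm : j ≤ m := by
          have := Finset.mem_range.mp hj; omega
        exact mul_le_mul_of_nonneg_left (hanti hjm) (by positivity)
      exact step1.trans step2
    have hlow : ((m : ℝ) + 1) ^ (s+1) * αstar m ≤
        (s+1) * ∑ j ∈ Finset.range (m+1), g j * αstar m := by
      rw [← Finset.sum_mul, ← mul_assoc]
      apply mul_le_mul_of_nonneg_right _ (hstar0 m)
      have := hpow_sum (m+1)
      push_cast at this ⊢
      linarith
    calc ((m : ℝ) + 1) ^ (s+1) * αstar m
        ≤ (s+1) * ∑ j ∈ Finset.range (m+1), g j * αstar m := hlow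
      _ ≤ (s+1) * ∑ j ∈ Finset.range (m+1), g (σ j) * αstar j := by
          apply mul_le_mul_of_nonneg_left hmid (by linarith)
      _ ≤ (s+1) * A := mul_le_mul_of_nonneg_left hub (by linarith)
  set B : ℝ := (s+1) * A with hBdef
  have hB0 : 0 ≤ B := mul_nonneg (by linarith) hA0
  set q : ℝ := 2*s+1 with hqdef
  have hq1 : 1 ≤ q := by rw [hqdef]; linarith
  have hq0 : 0 < q := by linarith
  have hn0 : (0:ℝ) < n := by exact_mod_cast hn
  -- squared pointwise bound
  have hsq : ∀ m : ℕ, (αstar m)^2 ≤ B^2 * ((m : ℝ) + 1) ^ (-(q+1)) := by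
    intro m
    have hx : (0:ℝ) < (m:ℝ)+1 := by positivity
    have h1 : αstar m ≤ B * ((m : ℝ) + 1) ^ (-(s+1)) := by
      have hp := hpoint m
      have hxp : (0:ℝ) < ((m:ℝ)+1) ^ (s+1) := Real.rpow_pos_of_pos hx _
      rw [Real.rpow_neg hx.le, mul_comm B, ← div_eq_inv_mul, le_div_iff₀ hxp]
      nlinarith [hp]
    have h2 : (αstar m)^2 ≤ (B * ((m : ℝ) + 1) ^ (-(s+1)))^2 :=
      pow_le_pow_left₀ (hstar0 m) h1 2
    refine h2.trans_eq ?_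
    rw [mul_pow, sq (((m:ℝ)+1) ^ (-(s+1))), ← Real.rpow_add hx]
    congr 1
    rw [hqdef]; ring
  -- partial sums of the tail
  have hpartial : ∀ m : ℕ, ∑ j ∈ Finset.range m, (αstar (n + j))^2 ≤
      B^2 * ((n:ℝ) ^ (-q) / q) := by
    intro m
    set c : ℕ → ℝ := fun j => ((n + j : ℕ) : ℝ) ^ (-q) with hcdef
    have hterm : ∀ j : ℕ, (αstar (n + j))^2 ≤ B^2 / q * (c j - c (j+1)) := by
      intro j
      have ha : (0:ℝ) < ((n + j : ℕ) : ℝ) := by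
        have : 1 ≤ n + j := by omega
        exact_mod_cast this
      have ht := aux_tail hq1 ha
      have hcast : ((n + (j+1) : ℕ) : ℝ) = ((n + j : ℕ) : ℝ) + 1 := by push_cast; ring
      have hsqj := hsq (n + j)
      have e : ((n + j : ℕ) : ℝ) + 1 = ((n + (j+1) : ℕ) : ℝ) := hcast.symm
      rw [e] at hsqj ht
      have hc : c j - c (j+1) = ((n+j:ℕ):ℝ) ^ (-q) - ((n+(j+1):ℕ):ℝ) ^ (-q) := by
        simp [hcdef]
      rw [hc]
      have hB2 : (0:ℝ) ≤ B^2 := sq_nonneg B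
      calc (αstar (n + j))^2 ≤ B^2 * ((n+(j+1):ℕ):ℝ) ^ (-(q+1)) := hsqj
        _ ≤ B^2 / q * (((n+j:ℕ):ℝ) ^ (-q) - ((n+(j+1):ℕ):ℝ) ^ (-q)) := by
            rw [div_mul_eq_mul_div, le_div_iff₀ hq0]
            calc B^2 * ((n+(j+1):ℕ):ℝ) ^ (-(q+1)) * q
                = B^2 * (q * ((n+(j+1):ℕ):ℝ) ^ (-(q+1))) := by ring
              _ ≤ B^2 * (((n+j:ℕ):ℝ) ^ (-q) - ((n+(j+1):ℕ):ℝ) ^ (-q)) :=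
                  mul_le_mul_of_nonneg_left ht hB2
              _ = B^2 * (((n+j:ℕ):ℝ) ^ (-q) - ((n+(j+1):ℕ):ℝ) ^ (-q)) := rfl
    calc ∑ j ∈ Finset.range m, (αstar (n + j))^2
        ≤ ∑ j ∈ Finset.range m, B^2 / q * (c j - c (j+1)) :=
          Finset.sum_le_sum (fun j _ => hterm j)
      _ = B^2 / q * (c 0 - c m) := by
          rw [← Finset.mul_sum, Finset.sum_range_sub' c m]
      _ ≤ B^2 / q * c 0 := by
          have hcm : 0 ≤ c m := Real.rpow_nonneg (Nat.cast_nonneg _) _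
          have : (0:ℝ) ≤ B^2 / q := by positivity
          nlinarith [this, hcm]
      _ = B^2 * ((n:ℝ) ^ (-q) / q) := by
          simp [hcdef]; ring
  -- identify the right-hand side squared
  set T : ℝ := (s+1) / Real.sqrt (2*s+1) * (n : ℝ) ^ (-(s+1/2)) * A with hTdef2
  have hT0 : 0 ≤ T := by
    apply mul_nonneg (mul_nonneg (div_nonneg (by linarith) (Real.sqrt_nonneg _)) _) hA0
    exact Real.rpow_nonneg hn0.le _
  have hTsq : T^2 = B^2 * ((n:ℝ) ^ (-q) / q) := by
    have hsq2 : Real.sqrt (2*s+1) ^ 2 = 2*s+1 := Real.sq_sqrt (by linarith)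
    have hnr : ((n:ℝ) ^ (-(s+1/2)))^2 = (n:ℝ) ^ (-q) := by
      rw [sq, ← Real.rpow_add hn0, hqdef]; ring_nf
    have hsqrtpos : (0:ℝ) < Real.sqrt (2*s+1) := Real.sqrt_pos.mpr (by linarith)
    rw [hTdef2, hBdef, mul_pow, mul_pow, div_pow, hsq2, hnr, hqdef]
    have h2s : (2*s+1 : ℝ) ≠ 0 := by linarith
    field_simp
  have htsum : ∑' j : ℕ, (αstar (n + j))^2 ≤ T^2 := by
    rw [hTsq]
    exact Real.tsum_le_of_sum_range_le (fun j => sq_nonneg _) hpartial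
  calc Real.sqrt (∑' j : ℕ, (αstar (n + j))^2)
      ≤ Real.sqrt (T^2) := Real.sqrt_le_sqrt htsum
    _ = T := by rw [Real.sqrt_sq hT0]
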